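/- The number of partial fillings of an n × k rectangular grid with left arrows and down arrows, such that every cell pointed at by an arrow (i.e., every cell strictly left of a left arrow in the same row, or strictly below a down arrow in the same column) is empty, equals B̂_n^k(1) = ∑_{j=0}^{min(n,k)} j! (j+1)! S(n+1,j+1) S(k+1,j+1). -/

import Mathlib

open Polynomial Finset

/-- Stirling numbers of the second kind. -/
def stirling2 : ℕ → ℕ → ℕ
  | 0, 0 => 1
  | 0, _ + 1 => 0
  | _ + 1, 0 => 0
  | n + 1, k + 1 => stirling2 n k + (k + 1) * stirling2 n (k + 1)

/-- The rising factorial (x+1)(x+2)⋯(x+j) as a polynomial in ℤ[x]. -/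
noncomputable def risingPoly (j : ℕ) : Polynomial ℤ :=
  ∏ i ∈ Finset.range j, (X + C (i + 1 : ℤ))

/-- The symmetrized poly-Bernoulli polynomial B̂ₙᵏ(x). -/
noncomputable def sB (n k : ℕ) : Polynomial ℤ :=
  ∑ j ∈ Finset.range (min n k + 1),
    C (j.factorial : ℤ) * risingPoly j *
      C (stirling2 (n + 1) (j + 1) : ℤ) * C (stirling2 (k + 1) (j + 1) : ℤ)

/-- A partial filling of an `n × k` grid: `some false` is a left arrow `←`,
`some true` is a down arrow `↓`, `none` is an empty cell. Rows are numbered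
top to bottom and columns left to right. -/
def IsAltTableau {n k : ℕ} (f : Fin n → Fin k → Option Bool) : Prop :=
  ∀ i j,
    (f i j = some false → ∀ j' : Fin k, j' < j → f i j' = none) ∧
    (f i j = some true → ∀ i' : Fin n, i < i' → f i' j = none)

instance {n k : ℕ} : DecidablePred (IsAltTableau (n := n) (k := k)) := fun _ =>
  inferInstanceAs (Decidable (∀ _ _, _ ∧ _))



lemma stirling2_succ_succ (n k : ℕ) :
    stirling2 (n+1) (k+1) = stirling2 n k + (k+1) * stirling2 n (k+1) := rfl

lemma stirling2_of_lt : ∀ n j, n < j → stirling2 n j = 0 := by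
  intro n
  induction n with
  | zero => intro j hj; cases j with | zero => omega | succ m => rfl
  | succ n ih =>
    intro j hj
    cases j with
    | zero => omega
    | succ m =>
      have h1 := ih m (by omega)
      have h2 := ih (m+1) (by omega)
      simp [stirling2_succ_succ, h1, h2]

lemma stirling2_one (n : ℕ) : stirling2 (n+1) 1 = 1 := by
  induction n with
  | zero => rfl
  | succ n ih =>
    show stirling2 (n+1) 0 + 1 * stirling2 (n+1) 1 = 1
    cases n <;> simp [ih] <;> rfl

lemma stirling2_zero_left (j : ℕ) : stirling2 0 (j+1) = 0 := rfl

lemma stirling2_zero_right (n : ℕ) : stirling2 (n+1) 0 = 0 := rfl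

lemma sum_choose_stirling : ∀ p q : ℕ,
    ∑ m ∈ range (p+1), p.choose m * stirling2 m q = stirling2 (p+1) (q+1) := by
  intro p
  induction p with
  | zero =>
    intro q
    simp [stirling2_succ_succ, stirling2_of_lt 0 (q+1) (by omega)]
  | succ p ih =>
    intro q
    cases q with
    | zero =>
      rw [Finset.sum_eq_single_of_mem 0 (by simp)]
      · show (p+1).choose 0 * stirling2 0 0 = stirling2 (p+2) 1
        rw [stirling2_one (p+1)]
        simp [show stirling2 0 0 = 1 from rfl]
      · intro m _ hm
        match m, hm with
        | m+1, _ => simp [stirling2_zero_right]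
    | succ q =>
      rw [Finset.sum_range_succ' _ (p+1)]
      have h0 : (p+1).choose 0 * stirling2 0 (q+1) = 0 := by
        simp [stirling2_zero_left]
      rw [h0, add_zero]
      have hsplit : ∀ m ∈ range (p+1), (p+1).choose (m+1) * stirling2 (m+1) (q+1)
          = (p.choose m * stirling2 m q + (q+1) * (p.choose m * stirling2 m (q+1)))
            + p.choose (m+1) * stirling2 (m+1) (q+1) := by
        intro m _
        rw [Nat.choose_succ_succ, stirling2_succ_succ]
        ring
      rw [Finset.sum_congr rfl hsplit, Finset.sum_add_distrib, Finset.sum_add_distrib,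
        ← Finset.mul_sum]
      have hA : ∑ m ∈ range (p+1), p.choose (m+1) * stirling2 (m+1) (q+1)
          = ∑ m ∈ range (p+1), p.choose m * stirling2 m (q+1) := by
        have h1 := Finset.sum_range_succ' (fun m => p.choose m * stirling2 m (q+1)) (p+1)
        rw [Finset.sum_range_succ (fun m => p.choose m * stirling2 m (q+1)) (p+1)] at h1
        simp only [stirling2_zero_left, Nat.choose_succ_self, mul_zero, zero_mul,
          add_zero, zero_add] at h1
        exact h1.symm
      rw [hA, ih, ih]
      show stirling2 (p+1) (q+1) + (q+1) * stirling2 (p+1) (q+2)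
          + stirling2 (p+1) (q+2) = stirling2 (p+2) (q+2)
      rw [stirling2_succ_succ (p+1) (q+1)]
      ring

def Rfun (n k : ℕ) : ℕ :=
  ∑ j ∈ range (k+1),
    j.factorial * (j+1).factorial * stirling2 (n+1) (j+1) * stirling2 (k+1) (j+1)

lemma K_eq (k j : ℕ) :
    ∑ m ∈ range (k+1), (k+1).choose m * stirling2 (m+1) (j+1)
      = (j+1) * stirling2 (k+1) (j+1) + (j+1)*(j+2) * stirling2 (k+1) (j+2) := by
  have h1 := sum_choose_stirling (k+1) j
  have h2 := sum_choose_stirling (k+1) (j+1)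
  rw [Finset.sum_range_succ, Nat.choose_self, one_mul, stirling2_succ_succ (k+1) j,
    add_comm (∑ m ∈ range (k+1), (k+1).choose m * stirling2 m j)] at h1
  have hA := Nat.add_left_cancel h1
  rw [Finset.sum_range_succ, Nat.choose_self, one_mul, stirling2_succ_succ (k+1) (j+1),
    add_comm (∑ m ∈ range (k+1), (k+1).choose m * stirling2 m (j+1))] at h2
  have hB := Nat.add_left_cancel h2
  have hsplit : ∀ m ∈ range (k+1), (k+1).choose m * stirling2 (m+1) (j+1)
      = (k+1).choose m * stirling2 m j + (j+1) * ((k+1).choose m * stirling2 m (j+1)) := by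
    intro m _
    rw [stirling2_succ_succ]
    ring
  rw [Finset.sum_congr rfl hsplit, Finset.sum_add_distrib, ← Finset.mul_sum, hA, hB]
  ring

lemma Rfun_zero (k : ℕ) : Rfun 0 k = 1 := by
  unfold Rfun
  rw [Finset.sum_eq_single_of_mem 0 (by simp)]
  · simp [stirling2_one, show stirling2 1 1 = 1 from rfl]
  · intro j _ hj
    match j, hj with
    | j+1, _ =>
      have : stirling2 1 (j+2) = 0 := stirling2_of_lt 1 (j+2) (by omega)
      simp [this]

lemma Rfun_succ (n k : ℕ) :
    Rfun (n+1) k = ∑ j ∈ range (k+1), (k+1).choose j * Rfun n j := by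
  have hinner : ∀ j ∈ range (k+1), (k+1).choose j * Rfun n j
      = ∑ i ∈ range (k+1), (k+1).choose j *
          (i.factorial * (i+1).factorial * stirling2 (n+1) (i+1) * stirling2 (j+1) (i+1)) := by
    intro j hj
    rw [Rfun, Finset.mul_sum]
    apply Finset.sum_subset
    · apply Finset.range_subset_range.mpr
      simp at hj; omega
    · intro i _ hi
      simp only [Finset.mem_range, not_lt] at hi
      have : stirling2 (j+1) (i+1) = 0 := stirling2_of_lt _ _ (by omega)
      simp [this]
  rw [Finset.sum_congr rfl hinner, Finset.sum_comm]
  have hswap : ∀ i ∈ range (k+1),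
      (∑ j ∈ range (k+1), (k+1).choose j *
        (i.factorial * (i+1).factorial * stirling2 (n+1) (i+1) * stirling2 (j+1) (i+1)))
      = i.factorial * (i+1).factorial * stirling2 (n+1) (i+1) *
          ((i+1) * stirling2 (k+1) (i+1) + (i+1)*(i+2) * stirling2 (k+1) (i+2)) := by
    intro i _
    rw [← K_eq k i, Finset.mul_sum]
    apply Finset.sum_congr rfl
    intro j _
    ring
  rw [Finset.sum_congr rfl hswap]
  have hexp : ∀ i ∈ range (k+1),
      i.factorial * (i+1).factorial * stirling2 (n+1) (i+1) *
          ((i+1) * stirling2 (k+1) (i+1) + (i+1)*(i+2) * stirling2 (k+1) (i+2))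
      = i.factorial * (i+1).factorial * ((i+1) * stirling2 (n+1) (i+1)) * stirling2 (k+1) (i+1)
        + (i.factorial * (i+1).factorial * (i+1)*(i+2)) * stirling2 (n+1) (i+1) * stirling2 (k+1) (i+2) := by
    intro i _
    ring
  rw [Finset.sum_congr rfl hexp, Finset.sum_add_distrib]
  have hL : ∀ j ∈ range (k+1),
      j.factorial * (j+1).factorial * stirling2 (n+2) (j+1) * stirling2 (k+1) (j+1)
      = j.factorial * (j+1).factorial * stirling2 (n+1) j * stirling2 (k+1) (j+1)
        + j.factorial * (j+1).factorial * ((j+1) * stirling2 (n+1) (j+1)) * stirling2 (k+1) (j+1) := by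
    intro j _
    rw [stirling2_succ_succ (n+1) j]
    ring
  rw [Rfun, Finset.sum_congr rfl hL, Finset.sum_add_distrib, add_comm]
  congr 1
  rw [Finset.sum_range_succ' (fun j => j.factorial * (j+1).factorial * stirling2 (n+1) j * stirling2 (k+1) (j+1)) k,
    Finset.sum_range_succ (fun i => (i.factorial * (i+1).factorial * (i+1)*(i+2)) * stirling2 (n+1) (i+1) * stirling2 (k+1) (i+2)) k]
  have e1 : stirling2 (n+1) 0 = 0 := stirling2_zero_right n
  have e2 : stirling2 (k+1) (k+2) = 0 := stirling2_of_lt _ _ (by omega)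
  rw [e1, e2]
  simp only [mul_zero, zero_mul, add_zero]
  apply Finset.sum_congr rfl
  intro j _
  rw [Nat.factorial_succ (j+1), Nat.factorial_succ j]
  ring


def ValidRow {k : ℕ} (g : Fin k → Option Bool) : Prop :=
  ∀ j, g j = some false → ∀ j' < j, g j' = none

instance {k : ℕ} : DecidablePred (ValidRow (k := k)) := fun _ =>
  inferInstanceAs (Decidable (∀ _, _ → ∀ _, _))

def downs {k : ℕ} (g : Fin k → Option Bool) : Finset (Fin k) :=
  univ.filter (fun j => g j = some true)

lemma alt_cons_iff {n k : ℕ} (g : Fin k → Option Bool) (t : Fin n → Fin k → Option Bool) :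
    IsAltTableau (Fin.cons g t) ↔
      ValidRow g ∧ IsAltTableau t ∧ (∀ j, g j = some true → ∀ i, t i j = none) := by
  constructor
  · intro h
    refine ⟨?_, ?_, ?_⟩
    · intro j hj j' hj'
      have := (h 0 j).1 (by simpa using hj) j' hj'
      simpa using this
    · intro i j
      constructor
      · intro hf j' hj'
        have := (h i.succ j).1 (by simpa using hf) j' hj'
        simpa using this
      · intro hf i' hi'
        have := (h i.succ j).2 (by simpa using hf) i'.succ
          (by simpa [Fin.succ_lt_succ_iff] using hi')
        simpa using this
    · intro j hj i
      have := (h 0 j).2 (by simpa using hj) i.succ (Fin.succ_pos i)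
      simpa using this
  · rintro ⟨hg, ht, hD⟩ i j
    induction i using Fin.cases with
    | zero =>
      constructor
      · intro hf j' hj'
        simpa using hg j (by simpa using hf) j' hj'
      · intro hf i' _
        induction i' using Fin.cases with
        | zero => simp_all
        | succ i'' => simpa using hD j (by simpa using hf) i''
    | succ i =>
      constructor
      · intro hf j' hj'
        simpa using (ht i j).1 (by simpa using hf) j' hj'
      · intro hf i' hi'
        induction i' using Fin.cases with
        | zero => exact absurd hi' (by simp [Fin.not_lt, Fin.zero_le])
        | succ i'' =>
          simpa using (ht i j).2 (by simpa using hf) i''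
            (by simpa [Fin.succ_lt_succ_iff] using hi')
lemma card_colsEmpty (n k : ℕ) (D : Finset (Fin k)) :
    Fintype.card {t : Fin n → Fin k → Option Bool //
        IsAltTableau t ∧ ∀ j ∈ D, ∀ i, t i j = none}
      = Fintype.card {s : Fin n → Fin (k - D.card) → Option Bool // IsAltTableau s} := by
  have hc : (Dᶜ).card = k - D.card := by
    rw [Finset.card_compl]
    simp
  let e : Fin (k - D.card) ≃o {x // x ∈ Dᶜ} := Dᶜ.orderIsoOfFin hc
  apply Fintype.card_congr
  refine
    { toFun := fun t => ⟨fun i j₀ => t.1 i (e j₀), ?_⟩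
      invFun := fun s => ⟨fun i j => if h : j ∈ Dᶜ then s.1 i (e.symm ⟨j, h⟩) else none, ?_, ?_⟩
      left_inv := ?_
      right_inv := ?_ }
  · -- restriction is alt
    obtain ⟨t, ht, hD⟩ := t
    intro i j₀
    constructor
    · intro hf j₀' hj₀'
      exact (ht i (e j₀)).1 hf (e j₀') (by exact_mod_cast e.lt_iff_lt.mpr hj₀')
    · intro hf i' hi'
      exact (ht i (e j₀)).2 hf i' hi'
  · -- expansion is alt
    obtain ⟨s, hs⟩ := s
    intro i j
    constructor
    · intro hf j' hj'
      by_cases h : j ∈ Dᶜ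
      · simp only [dif_pos h] at hf
        by_cases h' : j' ∈ Dᶜ
        · simp only [dif_pos h']
          exact (hs i (e.symm ⟨j, h⟩)).1 hf (e.symm ⟨j', h'⟩)
            (e.symm.lt_iff_lt.mpr (Subtype.mk_lt_mk.mpr hj'))
        · simp only [dif_neg h']
      · simp only [dif_neg h] at hf
        exact nomatch hf
    · intro hf i' hi'
      by_cases h : j ∈ Dᶜ
      · simp only [dif_pos h] at hf
        simp only [dif_pos h]
        exact (hs i (e.symm ⟨j, h⟩)).2 hf i' hi'
      · simp only [dif_neg h] at hf
        exact nomatch hf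
  · -- expansion has D-columns empty
    intro j hj i
    have h : j ∉ Dᶜ := by simpa using hj
    simp only [dif_neg h]
  · -- left inverse
    rintro ⟨t, ht, hD⟩
    apply Subtype.ext
    funext i j
    by_cases h : j ∈ Dᶜ
    · simp only [dif_pos h]
      congr 1
      have : e (e.symm ⟨j, h⟩) = ⟨j, h⟩ := e.apply_symm_apply _
      rw [this]
    · simp only [dif_neg h]
      exact (hD j (by simpa using h) i).symm
  · -- right inverse
    rintro ⟨s, hs⟩
    apply Subtype.ext
    funext i j₀
    have hmem : (e j₀ : Fin k) ∈ Dᶜ := (e j₀).2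
    simp only [dif_pos hmem]
    congr 1
    have : (⟨(e j₀ : Fin k), hmem⟩ : {x // x ∈ Dᶜ}) = e j₀ := rfl
    rw [this, e.symm_apply_apply]

def Tcard (n k : ℕ) : ℕ :=
  Fintype.card {f : Fin n → Fin k → Option Bool // IsAltTableau f}

lemma card_fiber (n k : ℕ) (g : Fin k → Option Bool) :
    Fintype.card {t : Fin n → Fin k → Option Bool // IsAltTableau (Fin.cons g t)}
      = if ValidRow g then Tcard n (k - (downs g).card) else 0 := by
  by_cases hv : ValidRow g
  · rw [if_pos hv]
    have e1 : {t : Fin n → Fin k → Option Bool // IsAltTableau (Fin.cons g t)}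
        ≃ {t : Fin n → Fin k → Option Bool //
            IsAltTableau t ∧ ∀ j ∈ downs g, ∀ i, t i j = none} := by
      apply Equiv.subtypeEquivRight
      intro t
      rw [alt_cons_iff]
      constructor
      · rintro ⟨_, ht, hD⟩
        exact ⟨ht, fun j hj i => hD j (by simpa [downs] using hj) i⟩
      · rintro ⟨ht, hD⟩
        exact ⟨hv, ht, fun j hj i => hD j (by simpa [downs] using hj) i⟩
    rw [Fintype.card_congr e1, card_colsEmpty]
    rfl
  · rw [if_neg hv]
    rw [Fintype.card_eq_zero_iff]
    exact ⟨fun t => hv ((alt_cons_iff g t.1).mp t.2).1⟩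

def decodeRow {k : ℕ} (c : Option (Fin k)) (D : Finset (Fin k)) : Fin k → Option Bool :=
  fun j => if some j = c then some false else if j ∈ D then some true else none

def OKrow {k : ℕ} (c : Option (Fin k)) (D : Finset (Fin k)) : Prop :=
  ∀ x ∈ D, ∀ y, c = some y → y < x

lemma decode_eq_false_iff {k : ℕ} {c : Option (Fin k)} {D : Finset (Fin k)}
    (j : Fin k) : decodeRow c D j = some false ↔ some j = c := by
  unfold decodeRow
  by_cases h : some j = c
  · simp [h]
  · rw [if_neg h]
    by_cases h2 : j ∈ D <;> simp [h2, h]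

lemma decode_eq_true_iff {k : ℕ} {c : Option (Fin k)} {D : Finset (Fin k)}
    (hOK : OKrow c D) (j : Fin k) : decodeRow c D j = some true ↔ j ∈ D := by
  unfold decodeRow
  by_cases h : some j = c
  · have : j ∉ D := fun hj => absurd (hOK j hj j h.symm) (lt_irrefl j)
    simp [h, this]
  · rw [if_neg h]
    by_cases h2 : j ∈ D <;> simp [h2]

lemma downs_decode {k : ℕ} {c : Option (Fin k)} {D : Finset (Fin k)}
    (hOK : OKrow c D) : downs (decodeRow c D) = D := by
  ext j
  simp [downs, decode_eq_true_iff hOK]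

lemma valid_decode {k : ℕ} {c : Option (Fin k)} {D : Finset (Fin k)}
    (hOK : OKrow c D) : ValidRow (decodeRow c D) := by
  intro j hj j' hj'
  rw [decode_eq_false_iff] at hj
  have hne : ¬ some j' = c := by
    rw [← hj]
    simp only [Option.some_inj]
    exact fun h => absurd (h ▸ hj') (lt_irrefl j)
  have hnD : j' ∉ D := fun hD => absurd (lt_trans (hOK j' hD j hj.symm) hj') (lt_irrefl j)
  simp [decodeRow, hne, hnD]

lemma decode_bij {k d : ℕ} :
    Function.Bijective (fun p : {p : Option (Fin k) × Finset (Fin k) //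
        OKrow p.1 p.2 ∧ p.2.card = d} =>
      (⟨decodeRow p.1.1 p.1.2, valid_decode p.2.1, by rw [downs_decode p.2.1]; exact p.2.2⟩
        : {g : Fin k → Option Bool // ValidRow g ∧ (downs g).card = d})) := by
  constructor
  · rintro ⟨⟨c, D⟩, hOK, hD⟩ ⟨⟨c', D'⟩, hOK', hD'⟩ heq
    simp only [Subtype.mk_eq_mk] at heq
    dsimp only at hOK hD hOK' hD'
    have hDeq : D = D' := by
      rw [← downs_decode (c := c) hOK, ← downs_decode (c := c') hOK', heq]
    apply Subtype.ext
    simp only [Prod.mk.injEq]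
    refine ⟨?_, hDeq⟩
    -- c = c'
    cases c with
    | none =>
      cases c' with
      | none => rfl
      | some y' =>
        have : decodeRow (some y') D' y' = some false := (decode_eq_false_iff y').mpr rfl
        rw [← heq] at this
        rw [decode_eq_false_iff] at this
        exact absurd this (by simp)
    | some y =>
      have : decodeRow (some y) D y = some false := (decode_eq_false_iff y).mpr rfl
      rw [heq] at this
      rw [decode_eq_false_iff] at this
      exact this
  · rintro ⟨g, hv, hd⟩
    by_cases hex : ∃ j, g j = some false
    · obtain ⟨y, hy⟩ := hex
      have hOK : OKrow (some y) (downs g) := by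
        intro x hx y' hy'
        simp only [Option.some_inj] at hy'
        subst hy'
        have hgx : g x = some true := by simpa [downs] using hx
        rcases lt_trichotomy y x with h | h | h
        · exact h
        · subst h; rw [hy] at hgx; exact absurd hgx (by simp)
        · have := hv y hy x h
          rw [this] at hgx; exact absurd hgx (by simp)
      refine ⟨⟨⟨some y, downs g⟩, hOK, hd⟩, ?_⟩
      apply Subtype.ext
      simp only
      funext j
      by_cases hj : j = y
      · subst hj
        rw [(decode_eq_false_iff j).mpr rfl, hy]
      · have hne : ¬ some j = some y := by simpa using hj
        by_cases hjD : j ∈ downs g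
        · rw [(decode_eq_true_iff hOK j).mpr hjD]
          exact ((by simpa [downs] using hjD : g j = some true)).symm
        · have : decodeRow (some y) (downs g) j = none := by
            simp [decodeRow, hne, hjD]
          rw [this]
          match hgj : g j with
          | none => rfl
          | some true => exact absurd (by simp [downs, hgj]) hjD
          | some false =>
            exfalso
            rcases lt_trichotomy j y with h | h | h
            · have := hv y hy j h; rw [this] at hgj; exact nomatch hgj
            · exact hj h
            · have := hv j hgj y h; rw [this] at hy; exact nomatch hy
    · -- no left arrow
      have hOK : OKrow (none : Option (Fin k)) (downs g) := by
        intro x _ y hy; exact nomatch hy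
      refine ⟨⟨⟨none, downs g⟩, hOK, hd⟩, ?_⟩
      apply Subtype.ext
      simp only
      funext j
      by_cases hjD : j ∈ downs g
      · rw [(decode_eq_true_iff hOK j).mpr hjD]
        exact ((by simpa [downs] using hjD : g j = some true)).symm
      · have : decodeRow none (downs g) j = none := by
          simp [decodeRow, hjD]
        rw [this]
        match hgj : g j with
        | none => rfl
        | some true => exact absurd (by simp [downs, hgj]) hjD
        | some false => exact absurd ⟨j, hgj⟩ hex

instance {k : ℕ} (c : Option (Fin k)) (D : Finset (Fin k)) : Decidable (OKrow c D) :=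
  inferInstanceAs (Decidable (∀ x ∈ D, ∀ y, c = some y → y < x))

lemma sum_range_choose_succ (k d : ℕ) : ∑ m ∈ range k, m.choose d = k.choose (d+1) := by
  induction k with
  | zero => simp
  | succ k ih =>
    rw [Finset.sum_range_succ, ih, Nat.choose_succ_succ]
    exact add_comm _ _

lemma card_OK_some (k d : ℕ) (y : Fin k) :
    Fintype.card {D : Finset (Fin k) // OKrow (some y) D ∧ D.card = d}
      = (k - 1 - (y : ℕ)).choose d := by
  have e : {D : Finset (Fin k) // OKrow (some y) D ∧ D.card = d}
      ≃ {D // D ∈ powersetCard d (Ioi y)} := by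
    apply Equiv.subtypeEquivRight
    intro D
    rw [Finset.mem_powersetCard]
    constructor
    · rintro ⟨hOK, hd⟩
      exact ⟨fun x hx => Finset.mem_Ioi.mpr (hOK x hx y rfl), hd⟩
    · rintro ⟨hsub, hd⟩
      refine ⟨fun x hx y' hy' => ?_, hd⟩
      have : y = y' := Option.some_inj.mp hy'
      subst this
      exact Finset.mem_Ioi.mp (hsub hx)
  rw [Fintype.card_congr e, Fintype.card_coe, Finset.card_powersetCard, Fin.card_Ioi]

lemma card_OK_none (k d : ℕ) :
    Fintype.card {D : Finset (Fin k) // OKrow (none : Option (Fin k)) D ∧ D.card = d}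
      = k.choose d := by
  have e : {D : Finset (Fin k) // OKrow (none : Option (Fin k)) D ∧ D.card = d}
      ≃ {D : Finset (Fin k) // D.card = d} := by
    apply Equiv.subtypeEquivRight
    intro D
    have : OKrow (none : Option (Fin k)) D := fun x _ y hy => nomatch hy
    tauto
  rw [Fintype.card_congr e, Fintype.card_finset_len]
  simp

lemma card_validRow (k d : ℕ) :
    (univ.filter (fun g : Fin k → Option Bool =>
        ValidRow g ∧ (downs g).card = d)).card = (k+1).choose (d+1) := by
  rw [← Fintype.card_subtype]
  rw [← Fintype.card_of_bijective (decode_bij (k := k) (d := d))]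
  have e2 : {p : Option (Fin k) × Finset (Fin k) // OKrow p.1 p.2 ∧ p.2.card = d}
      ≃ Σ c : Option (Fin k), {D : Finset (Fin k) // OKrow c D ∧ D.card = d} :=
    { toFun := fun p => ⟨p.1.1, p.1.2, p.2⟩
      invFun := fun q => ⟨(q.1, q.2.1), q.2.2⟩
      left_inv := fun p => rfl
      right_inv := fun q => rfl }
  rw [Fintype.card_congr e2, Fintype.card_sigma, Fintype.sum_option]
  rw [card_OK_none]
  have hsome : ∀ y : Fin k,
      Fintype.card {D : Finset (Fin k) // OKrow (some y) D ∧ D.card = d}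
        = (k - 1 - (y : ℕ)).choose d := card_OK_some k d
  rw [Finset.sum_congr rfl (fun y _ => hsome y)]
  have : ∑ y : Fin k, (k - 1 - (y : ℕ)).choose d = ∑ m ∈ range k, (k - 1 - m).choose d :=
    Fin.sum_univ_eq_sum_range (fun m => (k - 1 - m).choose d) k
  rw [this, Finset.sum_range_reflect (fun m => m.choose d) k, sum_range_choose_succ,
    Nat.choose_succ_succ]

lemma T_rec (n k : ℕ) :
    Tcard (n+1) k = ∑ j ∈ range (k+1), (k+1).choose j * Tcard n j := by
  -- fiber over the top row
  have step1 : Tcard (n+1) k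
      = ∑ g : Fin k → Option Bool,
          Fintype.card {t : Fin n → Fin k → Option Bool // IsAltTableau (Fin.cons g t)} := by
    rw [Tcard, Fintype.card_congr
      (Equiv.sigmaFiberEquiv (fun f : {f : Fin (n+1) → Fin k → Option Bool // IsAltTableau f}
        => f.1 0)).symm, Fintype.card_sigma]
    apply Finset.sum_congr rfl
    intro g _
    apply Fintype.card_congr
    refine
      { toFun := fun f => ⟨Fin.tail f.1.1, by
          obtain ⟨⟨f1, hf1⟩, h0⟩ := f
          simp only
          rw [← h0, Fin.cons_self_tail]
          exact hf1⟩
        invFun := fun t => ⟨⟨Fin.cons g t.1, t.2⟩, by simp⟩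
        left_inv := ?_
        right_inv := ?_ }
    · rintro ⟨⟨f, hf⟩, h0⟩
      apply Subtype.ext
      apply Subtype.ext
      simp only
      rw [← h0, Fin.cons_self_tail]
    · rintro ⟨t, ht⟩
      apply Subtype.ext
      simp only
      rw [Fin.tail_cons]
  rw [step1]
  have step2 : ∀ g : Fin k → Option Bool,
      Fintype.card {t : Fin n → Fin k → Option Bool // IsAltTableau (Fin.cons g t)}
        = if ValidRow g then Tcard n (k - (downs g).card) else 0 := card_fiber n k
  rw [Finset.sum_congr rfl (fun g _ => step2 g)]
  rw [Finset.sum_ite, Finset.sum_const_zero, add_zero]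
  -- group by number of down arrows
  have step3 : ∑ g ∈ univ.filter (fun g : Fin k → Option Bool => ValidRow g),
        Tcard n (k - (downs g).card)
      = ∑ d ∈ range (k+1), ∑ g ∈ (univ.filter (fun g : Fin k → Option Bool => ValidRow g)).filter
          (fun g => (downs g).card = d), Tcard n (k - (downs g).card) := by
    rw [Finset.sum_fiberwise_of_maps_to]
    intro g _
    simp only [Finset.mem_range]
    have : (downs g).card ≤ k := by
      simpa using Finset.card_le_univ (downs g)
    omega
  rw [step3]
  have step4 : ∀ d ∈ range (k+1),
      (∑ g ∈ (univ.filter (fun g : Fin k → Option Bool => ValidRow g)).filter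
          (fun g => (downs g).card = d), Tcard n (k - (downs g).card))
      = (k+1).choose (d+1) * Tcard n (k-d) := by
    intro d _
    rw [Finset.filter_filter]
    have hconst : ∀ g ∈ univ.filter (fun g : Fin k → Option Bool =>
        ValidRow g ∧ (downs g).card = d), Tcard n (k - (downs g).card) = Tcard n (k - d) := by
      intro g hg
      rw [Finset.mem_filter] at hg
      rw [hg.2.2]
    rw [Finset.sum_congr rfl hconst, Finset.sum_const, card_validRow, smul_eq_mul]
  rw [Finset.sum_congr rfl step4]
  -- reindex
  have := Finset.sum_range_reflect (fun d => (k+1).choose (d+1) * Tcard n (k-d)) (k+1)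
  rw [← this]
  apply Finset.sum_congr rfl
  intro j hj
  simp only [Finset.mem_range] at hj
  have h1 : k + 1 - 1 - j = k - j := by omega
  rw [h1]
  have h2 : k - (k - j) = j := by omega
  rw [h2]
  have h3 : k - j + 1 = (k+1) - j := by omega
  rw [h3, Nat.choose_symm (by omega)]


theorem altTableau_count (n k : ℕ) :
    Fintype.card {f : Fin n → Fin k → Option Bool // IsAltTableau f}
      = ∑ j ∈ Finset.range (min n k + 1),
          j.factorial * (j + 1).factorial *
            stirling2 (n + 1) (j + 1) * stirling2 (k + 1) (j + 1) := by
  have hT : ∀ n k, Tcard n k = Rfun n k := by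
    intro n
    induction n with
    | zero =>
      intro k
      rw [Rfun_zero, Tcard, Fintype.card_eq_one_iff]
      refine ⟨⟨fun i => i.elim0, fun i => i.elim0⟩, ?_⟩
      intro y
      apply Subtype.ext
      funext i
      exact i.elim0
    | succ n ih =>
      intro k
      rw [T_rec, Rfun_succ]
      exact Finset.sum_congr rfl fun j _ => by rw [ih j]
  have hmin : ∑ j ∈ Finset.range (min n k + 1),
        j.factorial * (j + 1).factorial *
          stirling2 (n + 1) (j + 1) * stirling2 (k + 1) (j + 1) = Rfun n k := by
    rw [Rfun]
    apply Finset.sum_subset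
    · exact Finset.range_subset_range.mpr (by omega)
    · intro j hj hj2
      simp only [Finset.mem_range] at hj hj2
      have hn : n < j := by omega
      have : stirling2 (n + 1) (j + 1) = 0 := stirling2_of_lt _ _ (by omega)
      simp [this]
  rw [hmin]
  exact hT n k
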